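/- arXiv:1007.2664 — 2 statements merged into one kernel-verified Lean document; each statement's English description precedes it below -/
import Mathlib

section
/- Let T > 0 and κ = √(T/(2π)). With ℱ(λ, 0, T) = f(λ; 1/T, 1/T) the equilibrium cumulant generating function of the confined tracer and 𝓘(j, 0, T) = sup_{λ∈ℝ}(λ j − ℱ(λ, 0, T)) its Legendre transform, one has for every λ and every j: lim_{ε↓0} ε^{−2} ℱ(ελ, 0, T) = κ λ² T² and lim_{ε↓0} ε^{−2} 𝓘(εj, 0, T) = j²/(4κT²). -/
open MeasureTheory Filter
open scoped Topology

/-- `C(x,η) = ∫₀^∞ v e^{−η/v − x v²/2} dv`. -/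
noncomputable def Ccal (x η : ℝ) : ℝ :=
  ∫ v in Set.Ioi (0 : ℝ), v * Real.exp (-η / v - x * v ^ 2 / 2)

/-- `F(λ,η) = β_L β_R C(β_R+λ, η) C(β_L−λ, η)`. -/
noncomputable def Fcal (βL βR lam η : ℝ) : ℝ :=
  βL * βR * Ccal (βR + lam) η * Ccal (βL - lam) η

/-- `f : ℝ → [0,∞]` is the cumulant generating function of the current for
inverse wall temperatures `β_L, β_R`: `f(λ)` is the unique positive solution of
`F(λ, f(λ)) = 1` on `(−β_R, β_L)` off the interval between `β_L−β_R` and `0`,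
`f ≡ 0` on that interval, and `f ≡ +∞` outside `(−β_R, β_L)`. -/
def IsCGF (βL βR : ℝ) (f : ℝ → EReal) : Prop :=
  (∀ lam ∈ Set.uIcc (βL - βR) 0, f lam = 0) ∧
  (∀ lam ∈ Set.Ioo (-βR) βL \ Set.uIcc (βL - βR) 0,
      ∃ η : ℝ, 0 < η ∧ Fcal βL βR lam η = 1 ∧ f lam = (η : EReal)) ∧
  (∀ lam ∉ Set.Ioo (-βR) βL, f lam = ⊤)

/-- Legendre transform `𝓘(j) = sup_λ (λ j − ℱ(λ))`. -/
noncomputable def legendre (f : ℝ → EReal) (j : ℝ) : EReal :=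
  ⨆ lam : ℝ, ((lam * j : ℝ) : EReal) - f lam

open Set Real

noncomputable def sig (x : ℝ) : ℝ := Real.sqrt (π / (x / 2)) / 2

noncomputable def Kc (x : ℝ) : ℝ :=
  ∫ v in Set.Ioi (0 : ℝ), (Real.sqrt v)⁻¹ * Real.exp (-(x / 2) * v ^ 2)

lemma sig_nonneg (x : ℝ) : 0 ≤ sig x := by
  unfold sig; positivity

lemma integral_exp_half (x : ℝ) :
    ∫ v in Set.Ioi (0 : ℝ), Real.exp (-(x / 2) * v ^ 2) = sig x := by
  rw [integral_gaussian_Ioi]; rfl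

lemma integral_id_exp_half {x : ℝ} (hx : 0 < x) :
    ∫ v in Set.Ioi (0 : ℝ), v * Real.exp (-(x / 2) * v ^ 2) = x⁻¹ := by
  have hb : 0 < x / 2 := half_pos hx
  have A : ∀ v : ℝ, HasDerivAt (fun w : ℝ => -x⁻¹ * Real.exp (-(x / 2) * w ^ 2))
      (v * Real.exp (-(x / 2) * v ^ 2)) v := by
    intro v
    have h1 : HasDerivAt (fun w : ℝ => -(x / 2) * w ^ 2) (-(x / 2) * (2 * v)) v := by
      simpa using ((hasDerivAt_pow 2 v).const_mul (-(x / 2)))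
    have h2 := (h1.exp).const_mul (-x⁻¹)
    refine h2.congr_deriv ?_
    have hx0 : x ≠ 0 := hx.ne'
    linear_combination (v * Real.exp (-(x / 2) * v ^ 2)) * (inv_mul_cancel₀ hx0)
  have B : Tendsto (fun w : ℝ => -x⁻¹ * Real.exp (-(x / 2) * w ^ 2)) atTop (𝓝 (-x⁻¹ * 0)) := by
    apply Tendsto.const_mul
    apply Real.tendsto_exp_atBot.comp
    exact (tendsto_pow_atTop two_ne_zero).const_mul_atTop_of_neg (by linarith)
  have := integral_Ioi_of_hasDerivAt_of_tendsto' (a := (0:ℝ)) (f := fun w : ℝ => -x⁻¹ * Real.exp (-(x / 2) * w ^ 2))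
      (fun v _ => A v) ((integrable_mul_exp_neg_mul_sq hb).integrableOn) B
  rw [this]; simp

lemma exp_neg_le (t : ℝ) (ht : 0 ≤ t) : Real.exp (-t) ≤ 1 - t + t * Real.sqrt t := by
  obtain ⟨s, hs0, rfl⟩ : ∃ s : ℝ, 0 ≤ s ∧ s ^ 2 = t := ⟨Real.sqrt t, Real.sqrt_nonneg t, Real.sq_sqrt ht⟩
  rw [Real.sqrt_sq hs0]
  rcases le_or_gt s 1 with h1 | h1
  · have h2 : Real.exp (-(s ^ 2)) ≤ (1 + s ^ 2)⁻¹ := by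
      rw [Real.exp_neg]
      exact inv_anti₀ (by positivity) (by linarith [Real.add_one_le_exp (s ^ 2)])
    have hpos : (0:ℝ) < 1 + s ^ 2 := by positivity
    refine h2.trans ?_
    rw [← one_div, div_le_iff₀ hpos]
    nlinarith [pow_nonneg hs0 3, sq_nonneg (1 - s), mul_nonneg (pow_nonneg hs0 3) (sq_nonneg (1 - s))]
  · have h2 : Real.exp (-(s ^ 2)) ≤ 1 := Real.exp_le_one_iff.mpr (by nlinarith)
    nlinarith

lemma exponent_split (x η v : ℝ) :
    Real.exp (-η / v - x * v ^ 2 / 2) = Real.exp (-η / v) * Real.exp (-(x / 2) * v ^ 2) := by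
  rw [← Real.exp_add]; ring_nf

lemma integrableOn_exp_half {x : ℝ} (hx : 0 < x) :
    IntegrableOn (fun v : ℝ => Real.exp (-(x / 2) * v ^ 2)) (Set.Ioi 0) :=
  (integrable_exp_neg_mul_sq (half_pos hx)).integrableOn

lemma integrableOn_id_exp_half {x : ℝ} (hx : 0 < x) :
    IntegrableOn (fun v : ℝ => v * Real.exp (-(x / 2) * v ^ 2)) (Set.Ioi 0) :=
  (integrable_mul_exp_neg_mul_sq (half_pos hx)).integrableOn

lemma integrableOn_isqrt_exp_half {x : ℝ} (hx : 0 < x) :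
    IntegrableOn (fun v : ℝ => (Real.sqrt v)⁻¹ * Real.exp (-(x / 2) * v ^ 2)) (Set.Ioi 0) := by
  have h := integrableOn_rpow_mul_exp_neg_mul_sq (half_pos hx) (s := -(1/2)) (by norm_num)
  apply h.congr_fun ?_ measurableSet_Ioi
  intro v hv
  simp only [Real.sqrt_eq_rpow]
  rw [← Real.rpow_neg (le_of_lt hv)]

lemma integrand_nonneg (x η : ℝ) {v : ℝ} (hv : 0 < v) :
    0 ≤ v * Real.exp (-η / v - x * v ^ 2 / 2) := by positivity

lemma integrableOn_main {x : ℝ} (η : ℝ) (hx : 0 < x) (hη : 0 ≤ η) :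
    IntegrableOn (fun v : ℝ => v * Real.exp (-η / v - x * v ^ 2 / 2)) (Set.Ioi 0) := by
  apply Integrable.mono' (integrableOn_id_exp_half hx)
  · apply Measurable.aestronglyMeasurable
    exact measurable_id.mul ((measurable_const.div measurable_id).sub
      ((measurable_id.pow_const 2).const_mul x |>.div_const 2)).exp
  · filter_upwards [ae_restrict_mem measurableSet_Ioi] with v hv
    rw [Real.norm_of_nonneg (integrand_nonneg x η hv)]
    apply mul_le_mul_of_nonneg_left _ (le_of_lt hv)
    apply Real.exp_le_exp.mpr
    have h1 : 0 ≤ η / v := div_nonneg hη (le_of_lt hv)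
    have h2 : x * v ^ 2 / 2 = x / 2 * v ^ 2 := by ring
    have h3 : -η / v = -(η / v) := by ring
    linarith

lemma Ccal_nonneg (x η : ℝ) : 0 ≤ Ccal x η :=
  setIntegral_nonneg measurableSet_Ioi fun _ hv => integrand_nonneg x η hv

lemma Ccal_anti {x η₁ η₂ : ℝ} (hx : 0 < x) (h1 : 0 ≤ η₁) (h12 : η₁ ≤ η₂) :
    Ccal x η₂ ≤ Ccal x η₁ := by
  apply setIntegral_mono_on (integrableOn_main η₂ hx (h1.trans h12)) (integrableOn_main η₁ hx h1)
    measurableSet_Ioi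
  intro v hv
  have hv0 : (0:ℝ) < v := hv
  apply mul_le_mul_of_nonneg_left _ hv0.le
  apply Real.exp_le_exp.mpr
  have h3 : η₁ / v ≤ η₂ / v := by gcongr
  have h4 : -η₁ / v = -(η₁ / v) := by ring
  have h5 : -η₂ / v = -(η₂ / v) := by ring
  linarith

lemma Ccal_lower {x η : ℝ} (hx : 0 < x) (hη : 0 ≤ η) :
    x⁻¹ - η * sig x ≤ Ccal x η := by
  have h1 : IntegrableOn
      (fun v : ℝ => v * Real.exp (-(x/2)*v^2) - η * Real.exp (-(x/2)*v^2)) (Set.Ioi 0) :=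
    (integrableOn_id_exp_half hx).sub ((integrableOn_exp_half hx).const_mul η)
  have hint : ∫ v in Set.Ioi (0:ℝ), (v * Real.exp (-(x/2)*v^2) - η * Real.exp (-(x/2)*v^2))
      = x⁻¹ - η * sig x := by
    rw [integral_sub (integrableOn_id_exp_half hx) ((integrableOn_exp_half hx).const_mul η),
      integral_id_exp_half hx, integral_const_mul, integral_exp_half]
  rw [Ccal, ← hint]
  apply setIntegral_mono_on h1 (integrableOn_main η hx hη) measurableSet_Ioi
  intro v hv
  have hv0 : (0:ℝ) < v := hv
  rw [exponent_split]
  have h2 : v - η ≤ v * Real.exp (-η / v) := by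
    have h3 := Real.one_sub_le_exp_neg (η / v)
    have h4 : -(η/v) = -η/v := by ring
    rw [h4] at h3
    have h5 := mul_le_mul_of_nonneg_left h3 hv0.le
    calc v - η = v * (1 - η/v) := by field_simp
    _ ≤ v * Real.exp (-η/v) := h5
  calc v * Real.exp (-(x/2)*v^2) - η * Real.exp (-(x/2)*v^2)
      = (v - η) * Real.exp (-(x/2)*v^2) := by ring
    _ ≤ (v * Real.exp (-η/v)) * Real.exp (-(x/2)*v^2) :=
        mul_le_mul_of_nonneg_right h2 (Real.exp_nonneg _)
    _ = v * (Real.exp (-η/v) * Real.exp (-(x/2)*v^2)) := by ring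

lemma Kc_nonneg (x : ℝ) : 0 ≤ Kc x :=
  setIntegral_nonneg measurableSet_Ioi fun v _ => by positivity

lemma Kc_mono {q x : ℝ} (hq : 0 < q) (hqx : q ≤ x) : Kc x ≤ Kc q := by
  apply setIntegral_mono_on (integrableOn_isqrt_exp_half (hq.trans_le hqx))
    (integrableOn_isqrt_exp_half hq) measurableSet_Ioi
  intro v hv
  apply mul_le_mul_of_nonneg_left _ (by positivity)
  apply Real.exp_le_exp.mpr
  nlinarith [sq_nonneg v]

lemma Ccal_upper {q x η : ℝ} (hq : 0 < q) (hqx : q ≤ x) (hη : 0 ≤ η) :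
    Ccal x η ≤ x⁻¹ - η * sig x + η * Real.sqrt η * Kc q := by
  have hx : 0 < x := hq.trans_le hqx
  have h1 : Ccal x η ≤ x⁻¹ - η * sig x + η * Real.sqrt η * Kc x := by
    have hup : IntegrableOn (fun v : ℝ => v * Real.exp (-(x/2)*v^2) - η * Real.exp (-(x/2)*v^2)
        + η * Real.sqrt η * ((Real.sqrt v)⁻¹ * Real.exp (-(x/2)*v^2))) (Set.Ioi 0) :=
      ((integrableOn_id_exp_half hx).sub ((integrableOn_exp_half hx).const_mul η)).add
        ((integrableOn_isqrt_exp_half hx).const_mul _)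
    have hint : ∫ v in Set.Ioi (0:ℝ), (v * Real.exp (-(x/2)*v^2) - η * Real.exp (-(x/2)*v^2)
        + η * Real.sqrt η * ((Real.sqrt v)⁻¹ * Real.exp (-(x/2)*v^2)))
        = x⁻¹ - η * sig x + η * Real.sqrt η * Kc x := by
      have hsub : IntegrableOn
          (fun v : ℝ => v * Real.exp (-(x/2)*v^2) - η * Real.exp (-(x/2)*v^2)) (Set.Ioi 0) :=
        (integrableOn_id_exp_half hx).sub ((integrableOn_exp_half hx).const_mul η)
      have hKint : IntegrableOn
          (fun v : ℝ => η * Real.sqrt η * ((Real.sqrt v)⁻¹ * Real.exp (-(x/2)*v^2))) (Set.Ioi 0) :=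
        (integrableOn_isqrt_exp_half hx).const_mul _
      rw [integral_add hsub hKint,
        integral_sub (integrableOn_id_exp_half hx) ((integrableOn_exp_half hx).const_mul η),
        integral_id_exp_half hx, integral_const_mul, integral_exp_half, integral_const_mul]
      rfl
    rw [Ccal, ← hint]
    apply setIntegral_mono_on (integrableOn_main η hx hη) hup measurableSet_Ioi
    intro v hv
    have hv0 : (0:ℝ) < v := hv
    rw [exponent_split]
    have hsv : (0:ℝ) < Real.sqrt v := Real.sqrt_pos.mpr hv0
    have h2 : v * Real.exp (-η / v) ≤ v - η + η * Real.sqrt η * (Real.sqrt v)⁻¹ := by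
      have h3 := exp_neg_le (η / v) (div_nonneg hη hv0.le)
      have h4 : -(η/v) = -η/v := by ring
      rw [h4] at h3
      have h5 := mul_le_mul_of_nonneg_left h3 hv0.le
      have h6 : Real.sqrt (η / v) = Real.sqrt η / Real.sqrt v := Real.sqrt_div hη v
      rw [h6] at h5
      have h7 : v * (1 - η / v + η / v * (Real.sqrt η / Real.sqrt v))
          = v - η + η * Real.sqrt η * (Real.sqrt v)⁻¹ := by
        field_simp
      rw [h7] at h5
      exact h5
    calc v * (Real.exp (-η/v) * Real.exp (-(x/2)*v^2))
        = (v * Real.exp (-η/v)) * Real.exp (-(x/2)*v^2) := by ring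
      _ ≤ (v - η + η * Real.sqrt η * (Real.sqrt v)⁻¹) * Real.exp (-(x/2)*v^2) :=
          mul_le_mul_of_nonneg_right h2 (Real.exp_nonneg _)
      _ = v * Real.exp (-(x/2)*v^2) - η * Real.exp (-(x/2)*v^2)
          + η * Real.sqrt η * ((Real.sqrt v)⁻¹ * Real.exp (-(x/2)*v^2)) := by ring
  refine h1.trans ?_
  have := mul_le_mul_of_nonneg_left (Kc_mono hq hqx) (by positivity : 0 ≤ η * Real.sqrt η)
  linarith

lemma sig_continuousAt {x : ℝ} (hx : 0 < x) : ContinuousAt sig x := by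
  unfold sig
  apply ContinuousAt.div_const
  apply Real.continuous_sqrt.continuousAt.comp
  exact continuousAt_const.div (continuousAt_id.div_const 2) (by positivity)

lemma tendsto_add0 (β : ℝ) : Tendsto (fun lam : ℝ => β + lam) (𝓝 0) (𝓝 β) := by
  simpa using (tendsto_const_nhds (x := β)).add (tendsto_id (x := 𝓝 (0:ℝ)))

lemma tendsto_sub0 (β : ℝ) : Tendsto (fun lam : ℝ => β - lam) (𝓝 0) (𝓝 β) := by
  simpa using (tendsto_const_nhds (x := β)).sub (tendsto_id (x := 𝓝 (0:ℝ)))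

lemma tendsto_sig_add {β : ℝ} (hβ : 0 < β) :
    Tendsto (fun lam : ℝ => sig (β + lam)) (𝓝 0) (𝓝 (sig β)) :=
  ((sig_continuousAt hβ).tendsto).comp (tendsto_add0 β)

lemma tendsto_sig_sub {β : ℝ} (hβ : 0 < β) :
    Tendsto (fun lam : ℝ => sig (β - lam)) (𝓝 0) (𝓝 (sig β)) :=
  ((sig_continuousAt hβ).tendsto).comp (tendsto_sub0 β)

lemma tendsto_sq0 : Tendsto (fun lam : ℝ => lam ^ 2) (𝓝 0) (𝓝 0) := by
  simpa using (tendsto_id (x := 𝓝 (0:ℝ))).pow 2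

lemma tendsto_P_add {β : ℝ} (hβ : 0 < β) (c : ℝ) :
    Tendsto (fun lam : ℝ => (β+lam)⁻¹ - c*lam^2*sig (β+lam)) (𝓝 0) (𝓝 (β⁻¹)) := by
  have h1 := (tendsto_add0 β).inv₀ (ne_of_gt hβ)
  have h2 : Tendsto (fun lam : ℝ => c*lam^2*sig (β+lam)) (𝓝 0) (𝓝 0) := by
    have := ((tendsto_const_nhds (x := c)).mul tendsto_sq0).mul (tendsto_sig_add hβ)
    simpa using this
  simpa using h1.sub h2

lemma tendsto_P_sub {β : ℝ} (hβ : 0 < β) (c : ℝ) :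
    Tendsto (fun lam : ℝ => (β-lam)⁻¹ - c*lam^2*sig (β-lam)) (𝓝 0) (𝓝 (β⁻¹)) := by
  have h1 := (tendsto_sub0 β).inv₀ (ne_of_gt hβ)
  have h2 : Tendsto (fun lam : ℝ => c*lam^2*sig (β-lam)) (𝓝 0) (𝓝 0) := by
    have := ((tendsto_const_nhds (x := c)).mul tendsto_sq0).mul (tendsto_sig_sub hβ)
    simpa using this
  simpa using h1.sub h2

noncomputable def hfun (β c lam : ℝ) : ℝ :=
  (β^2 - lam^2)⁻¹ - c*β^2*(sig (β+lam)/(β-lam) + sig (β-lam)/(β+lam))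
    + c^2*lam^2*β^2*(sig (β+lam))*(sig (β-lam))

lemma hfun_tendsto {β : ℝ} (hβ : 0 < β) (c : ℝ) :
    Tendsto (hfun β c) (𝓝 0) (𝓝 ((β^2)⁻¹ - 2*c*β*sig β)) := by
  have h1 : Tendsto (fun lam : ℝ => (β^2 - lam^2)⁻¹) (𝓝 0) (𝓝 ((β^2)⁻¹)) := by
    have : Tendsto (fun lam : ℝ => β^2 - lam^2) (𝓝 0) (𝓝 (β^2)) := by
      simpa using (tendsto_const_nhds (x := β^2)).sub tendsto_sq0
    exact this.inv₀ (by positivity)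
  have h2 : Tendsto (fun lam : ℝ => c*β^2*(sig (β+lam)/(β-lam) + sig (β-lam)/(β+lam)))
      (𝓝 0) (𝓝 (c*β^2*(sig β/β + sig β/β))) := by
    apply Tendsto.const_mul
    exact ((tendsto_sig_add hβ).div (tendsto_sub0 β) (ne_of_gt hβ)).add
      ((tendsto_sig_sub hβ).div (tendsto_add0 β) (ne_of_gt hβ))
  have h3 : Tendsto (fun lam : ℝ => c^2*lam^2*β^2*(sig (β+lam))*(sig (β-lam))) (𝓝 0) (𝓝 0) := by
    have := ((((tendsto_const_nhds (x := c^2)).mul tendsto_sq0).mul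
      (tendsto_const_nhds (x := β^2))).mul (tendsto_sig_add hβ)).mul (tendsto_sig_sub hβ)
    simpa using this
  have h4 := (h1.sub h2).add h3
  have h5 : (β^2)⁻¹ - c*β^2*(sig β/β + sig β/β) + 0 = (β^2)⁻¹ - 2*c*β*sig β := by
    field_simp
    ring
  rw [h5] at h4
  exact h4

lemma LB_identity (β c lam : ℝ) (h1 : β + lam ≠ 0) (h2 : β - lam ≠ 0) :
    β^2 * ((β+lam)⁻¹ - c*lam^2*sig (β+lam)) * ((β-lam)⁻¹ - c*lam^2*sig (β-lam))
      = 1 + lam^2 * hfun β c lam := by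
  have h3 : β^2 - lam^2 ≠ 0 := by
    have : β^2 - lam^2 = (β+lam)*(β-lam) := by ring
    rw [this]
    exact mul_ne_zero h1 h2
  unfold hfun
  field_simp
  ring

lemma Fcal_anti {β lam η₁ η₂ : ℝ} (h1 : 0 < β + lam) (h2 : 0 < β - lam)
    (hη1 : 0 ≤ η₁) (h12 : η₁ ≤ η₂) (hβ : 0 < β) :
    Fcal β β lam η₂ ≤ Fcal β β lam η₁ := by
  unfold Fcal
  have hC1 := Ccal_anti h1 hη1 h12
  have hC2 := Ccal_anti h2 hη1 h12
  have hn2 := Ccal_nonneg (β - lam) η₂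
  have hn1 := Ccal_nonneg (β + lam) η₁
  apply mul_le_mul (mul_le_mul_of_nonneg_left hC1 (by positivity)) hC2 hn2
  exact mul_nonneg (by positivity) hn1

lemma Fcal_ge_LB {β lam η : ℝ} (h1 : 0 < β + lam) (h2 : 0 < β - lam) (hη : 0 ≤ η)
    (hP2 : 0 ≤ (β-lam)⁻¹ - η*sig (β-lam)) :
    β^2 * ((β+lam)⁻¹ - η*sig (β+lam)) * ((β-lam)⁻¹ - η*sig (β-lam)) ≤ Fcal β β lam η := by
  unfold Fcal
  have hC1 := Ccal_lower h1 hη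
  have hC2 := Ccal_lower h2 hη
  have hle : ((β+lam)⁻¹ - η*sig (β+lam)) * ((β-lam)⁻¹ - η*sig (β-lam))
      ≤ Ccal (β+lam) η * Ccal (β-lam) η :=
    mul_le_mul hC1 hC2 hP2 (Ccal_nonneg _ _)
  calc β^2 * ((β+lam)⁻¹ - η*sig (β+lam)) * ((β-lam)⁻¹ - η*sig (β-lam))
      = β^2 * (((β+lam)⁻¹ - η*sig (β+lam)) * ((β-lam)⁻¹ - η*sig (β-lam))) := by ring
    _ ≤ β^2 * (Ccal (β+lam) η * Ccal (β-lam) η) :=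
        mul_le_mul_of_nonneg_left hle (by positivity)
    _ = β * β * Ccal (β+lam) η * Ccal (β-lam) η := by ring

lemma eta_lower {β c : ℝ} (hβ : 0 < β) (hc : 0 < c) (hcs : 2*c*β*sig β < (β^2)⁻¹) :
    ∃ r : ℝ, 0 < r ∧ r < β/2 ∧ ∀ lam : ℝ, lam ≠ 0 → |lam| < r →
      ∀ η : ℝ, 0 < η → Fcal β β lam η = 1 → c * lam^2 < η := by
  have hh := (hfun_tendsto hβ c).eventually (eventually_gt_nhds (by linarith :
    (0:ℝ) < (β^2)⁻¹ - 2*c*β*sig β))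
  have hp2 := (tendsto_P_sub hβ c).eventually (eventually_gt_nhds (by positivity : (0:ℝ) < β⁻¹))
  have hsmall : ∀ᶠ lam : ℝ in 𝓝 0, |lam| < β/2 := by
    have := eventually_abs_sub_lt (0:ℝ) (by positivity : (0:ℝ) < β/2)
    simpa using this
  have hev := (hh.and hp2).and hsmall
  rw [Metric.eventually_nhds_iff] at hev
  obtain ⟨r0, hr0, H⟩ := hev
  refine ⟨min (r0/2) (β/4), by positivity, ?_, ?_⟩
  · calc min (r0/2) (β/4) ≤ β/4 := min_le_right _ _
      _ < β/2 := by linarith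
  intro lam hlam hlamr η hη hF
  by_contra hcon
  push_neg at hcon
  have hd : dist lam 0 < r0 := by
    rw [Real.dist_eq, sub_zero]
    calc |lam| < min (r0/2) (β/4) := hlamr
      _ ≤ r0/2 := min_le_left _ _
      _ < r0 := by linarith
  obtain ⟨⟨hhl, hp2l⟩, hsm⟩ := H hd
  have hx1 : 0 < β + lam := by
    rcases abs_lt.mp hsm with ⟨ha, hb⟩; linarith
  have hx2 : 0 < β - lam := by
    rcases abs_lt.mp hsm with ⟨ha, hb⟩; linarith
  have h0le : (0:ℝ) ≤ c * lam^2 := by positivity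
  have hFanti : Fcal β β lam (c*lam^2) ≤ Fcal β β lam η :=
    Fcal_anti hx1 hx2 hη.le hcon hβ
  have hLB := Fcal_ge_LB (η := c*lam^2) hx1 hx2 h0le (by
    have : c*lam^2*sig (β-lam) = c*lam^2*sig (β-lam) := rfl
    linarith [hp2l])
  rw [LB_identity β c lam (ne_of_gt hx1) (ne_of_gt hx2)] at hLB
  have hlam2 : 0 < lam^2 := by positivity
  have : (1:ℝ) < 1 + lam^2 * hfun β c lam := by nlinarith
  rw [hF] at hFanti
  linarith

lemma Fcal_le_UB {β lam η : ℝ} (hβ : 0 < β) (h1 : β/2 ≤ β + lam) (h2 : β/2 ≤ β - lam)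
    (hη : 0 ≤ η) :
    Fcal β β lam η ≤ β^2 * ((β+lam)⁻¹ - η*sig (β+lam) + η*Real.sqrt η*Kc (β/2))
      * ((β-lam)⁻¹ - η*sig (β-lam) + η*Real.sqrt η*Kc (β/2)) := by
  have hq : 0 < β/2 := by positivity
  have hC1 := Ccal_upper hq h1 hη
  have hC2 := Ccal_upper hq h2 hη
  have hU1 : (0:ℝ) ≤ (β+lam)⁻¹ - η*sig (β+lam) + η*Real.sqrt η*Kc (β/2) :=
    le_trans (Ccal_nonneg _ _) hC1
  have hle : Ccal (β+lam) η * Ccal (β-lam) η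
      ≤ ((β+lam)⁻¹ - η*sig (β+lam) + η*Real.sqrt η*Kc (β/2))
        * ((β-lam)⁻¹ - η*sig (β-lam) + η*Real.sqrt η*Kc (β/2)) :=
    mul_le_mul hC1 hC2 (Ccal_nonneg _ _) hU1
  calc Fcal β β lam η = β^2 * (Ccal (β+lam) η * Ccal (β-lam) η) := by unfold Fcal; ring
    _ ≤ β^2 * (((β+lam)⁻¹ - η*sig (β+lam) + η*Real.sqrt η*Kc (β/2))
        * ((β-lam)⁻¹ - η*sig (β-lam) + η*Real.sqrt η*Kc (β/2))) :=
        mul_le_mul_of_nonneg_left hle (by positivity)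
    _ = _ := by ring

noncomputable def gfun (β c lam : ℝ) : ℝ :=
  hfun β c lam + β^2*(c * Real.sqrt (c*lam^2) * Kc (β/2)
      * (((β+lam)⁻¹ - c*lam^2*sig (β+lam)) + ((β-lam)⁻¹ - c*lam^2*sig (β-lam)))
    + (c * Real.sqrt (c*lam^2) * Kc (β/2))^2 * lam^2)

lemma UB_identity (β c lam : ℝ) (h1 : β + lam ≠ 0) (h2 : β - lam ≠ 0) :
    β^2 * ((β+lam)⁻¹ - (c*lam^2)*sig (β+lam) + (c*lam^2)*Real.sqrt (c*lam^2)*Kc (β/2))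
      * ((β-lam)⁻¹ - (c*lam^2)*sig (β-lam) + (c*lam^2)*Real.sqrt (c*lam^2)*Kc (β/2))
      = 1 + lam^2 * gfun β c lam := by
  have base := LB_identity β c lam h1 h2
  unfold gfun
  linear_combination base

lemma gfun_tendsto {β : ℝ} (hβ : 0 < β) (c : ℝ) :
    Tendsto (gfun β c) (𝓝 0) (𝓝 ((β^2)⁻¹ - 2*c*β*sig β)) := by
  have h1 := hfun_tendsto hβ c
  have hsq : Tendsto (fun lam : ℝ => Real.sqrt (c*lam^2)) (𝓝 0) (𝓝 0) := by
    have h := Real.continuous_sqrt.tendsto (0:ℝ)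
    have h2 : Tendsto (fun lam : ℝ => c*lam^2) (𝓝 0) (𝓝 0) := by
      simpa using (tendsto_const_nhds (x := c)).mul tendsto_sq0
    simpa [Function.comp_def] using h.comp h2
  have h2 : Tendsto (fun lam : ℝ => β^2*(c * Real.sqrt (c*lam^2) * Kc (β/2)
      * (((β+lam)⁻¹ - c*lam^2*sig (β+lam)) + ((β-lam)⁻¹ - c*lam^2*sig (β-lam)))
    + (c * Real.sqrt (c*lam^2) * Kc (β/2))^2 * lam^2)) (𝓝 0) (𝓝 0) := by
    have hA : Tendsto (fun lam : ℝ => c * Real.sqrt (c*lam^2) * Kc (β/2)) (𝓝 0) (𝓝 0) := by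
      have := ((tendsto_const_nhds (x := c)).mul hsq).mul (tendsto_const_nhds (x := Kc (β/2)))
      simpa using this
    have hB := (tendsto_P_add hβ c).add (tendsto_P_sub hβ c)
    have hC := hA.mul hB
    have hD : Tendsto (fun lam : ℝ => (c * Real.sqrt (c*lam^2) * Kc (β/2))^2 * lam^2)
        (𝓝 0) (𝓝 0) := by
      have := ((hA.pow 2).mul tendsto_sq0)
      simpa using this
    have := (hC.add hD).const_mul (β^2)
    simpa using this
  have := h1.add h2
  rw [add_zero] at this
  exact this

lemma eta_upper {β c : ℝ} (hβ : 0 < β) (hcs : (β^2)⁻¹ < 2*c*β*sig β) :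
    ∃ r : ℝ, 0 < r ∧ r < β/2 ∧ ∀ lam : ℝ, lam ≠ 0 → |lam| < r →
      ∀ η : ℝ, 0 < η → Fcal β β lam η = 1 → η < c * lam^2 := by
  have hσ := sig_nonneg β
  have hinv : (0:ℝ) < (β^2)⁻¹ := by positivity
  have hc : 0 < c := by
    by_contra hc0
    push_neg at hc0
    have hbs : 0 ≤ β * sig β := mul_nonneg hβ.le hσ
    nlinarith [mul_nonneg (neg_nonneg.mpr hc0) hbs]
  have hh := (gfun_tendsto hβ c).eventually (eventually_lt_nhds (by linarith :
    (β^2)⁻¹ - 2*c*β*sig β < 0))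
  have hsmall : ∀ᶠ lam : ℝ in 𝓝 0, |lam| < β/2 := by
    have := eventually_abs_sub_lt (0:ℝ) (by positivity : (0:ℝ) < β/2)
    simpa using this
  have hev := hh.and hsmall
  rw [Metric.eventually_nhds_iff] at hev
  obtain ⟨r0, hr0, H⟩ := hev
  refine ⟨min (r0/2) (β/4), by positivity, ?_, ?_⟩
  · calc min (r0/2) (β/4) ≤ β/4 := min_le_right _ _
      _ < β/2 := by linarith
  intro lam hlam hlamr η hη hF
  by_contra hcon
  push_neg at hcon
  have hd : dist lam 0 < r0 := by
    rw [Real.dist_eq, sub_zero]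
    calc |lam| < min (r0/2) (β/4) := hlamr
      _ ≤ r0/2 := min_le_left _ _
      _ < r0 := by linarith
  obtain ⟨hhl, hsm⟩ := H hd
  have hx1 : 0 < β + lam := by rcases abs_lt.mp hsm with ⟨ha, hb⟩; linarith
  have hx2 : 0 < β - lam := by rcases abs_lt.mp hsm with ⟨ha, hb⟩; linarith
  have hx1' : β/2 ≤ β + lam := by rcases abs_lt.mp hsm with ⟨ha, hb⟩; linarith
  have hx2' : β/2 ≤ β - lam := by rcases abs_lt.mp hsm with ⟨ha, hb⟩; linarith
  have h0le : (0:ℝ) ≤ c * lam^2 := by positivity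
  have hFanti : Fcal β β lam η ≤ Fcal β β lam (c*lam^2) :=
    Fcal_anti hx1 hx2 h0le hcon hβ
  have hUB := Fcal_le_UB (η := c*lam^2) hβ hx1' hx2' h0le
  rw [UB_identity β c lam (ne_of_gt hx1) (ne_of_gt hx2)] at hUB
  have hlam2 : 0 < lam^2 := by positivity
  rw [hF] at hFanti
  nlinarith

lemma x_sig_le {β x : ℝ} (hβ : 0 < β) (hx : 0 < x) (hx2 : x ≤ 2*β) :
    x * sig x ≤ Real.sqrt (π*β) := by
  unfold sig
  have hxne : x ≠ 0 := ne_of_gt hx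
  have e1 : x * (Real.sqrt (π/(x/2))/2) = Real.sqrt (x^2*(π/(x/2)))/2 := by
    rw [Real.sqrt_mul (sq_nonneg x), Real.sqrt_sq hx.le]
    ring
  rw [e1]
  have e2 : x^2*(π/(x/2)) = 2*π*x := by field_simp
  rw [e2]
  have e3 : Real.sqrt (2*π*x) ≤ Real.sqrt (4*(π*β)) :=
    Real.sqrt_le_sqrt (by nlinarith [pi_pos])
  have e4 : Real.sqrt (4*(π*β)) = 2*Real.sqrt (π*β) := by
    rw [show (4:ℝ)*(π*β) = 2^2*(π*β) by norm_num, Real.sqrt_mul (by positivity),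
      Real.sqrt_sq (by norm_num)]
  linarith

lemma eta_mid {β r : ℝ} (hβ : 0 < β) (hr : 0 < r) (hrβ : r < β) :
    ∃ m : ℝ, 0 < m ∧ ∀ lam : ℝ, |lam| < β → r ≤ |lam| →
      ∀ η : ℝ, 0 < η → Fcal β β lam η = 1 → m < η := by
  have hM0 : 0 < Real.sqrt (π*β) := Real.sqrt_pos.mpr (by positivity)
  set M := Real.sqrt (π*β) with hMdef
  refine ⟨r^2/(4*M*β^2), by positivity, ?_⟩
  intro lam hlam hrlam η hη hF
  by_contra hcon
  push_neg at hcon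
  obtain ⟨hl1, hl2⟩ := abs_lt.mp hlam
  have hx1 : 0 < β + lam := by linarith
  have hx2 : 0 < β - lam := by linarith
  have hs1 : (β+lam) * sig (β+lam) ≤ M := x_sig_le hβ hx1 (by linarith)
  have hs2 : (β-lam) * sig (β-lam) ≤ M := x_sig_le hβ hx2 (by linarith)
  have hrl : r^2 ≤ lam^2 := by
    have h := pow_le_pow_left₀ hr.le hrlam 2
    simpa [sq_abs] using h
  have hlb : lam^2 < β^2 := sq_lt_sq' (by linarith) hl2
  have hu : η * M ≤ r^2/(4*β^2) := by
    have h := mul_le_mul_of_nonneg_right hcon hM0.le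
    calc η*M ≤ r^2/(4*M*β^2)*M := h
      _ = r^2/(4*β^2) := by field_simp
  have hu4 : η * M ≤ 1/4 := by
    have h : r^2/(4*β^2) ≤ 1/4 := by
      rw [div_le_div_iff₀ (by positivity) (by norm_num)]
      nlinarith
    linarith
  have hup : 0 < η*M := by positivity
  have hsig1 : sig (β+lam) ≤ (β+lam)⁻¹*M := by
    calc sig (β+lam) = (β+lam)⁻¹*((β+lam)*sig (β+lam)) := by field_simp
      _ ≤ (β+lam)⁻¹*M := mul_le_mul_of_nonneg_left hs1 (by positivity)
  have hsig2 : sig (β-lam) ≤ (β-lam)⁻¹*M := by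
    calc sig (β-lam) = (β-lam)⁻¹*((β-lam)*sig (β-lam)) := by field_simp
      _ ≤ (β-lam)⁻¹*M := mul_le_mul_of_nonneg_left hs2 (by positivity)
  have key1 : η*sig (β+lam) ≤ η*((β+lam)⁻¹*M) := mul_le_mul_of_nonneg_left hsig1 hη.le
  have key2 : η*sig (β-lam) ≤ η*((β-lam)⁻¹*M) := mul_le_mul_of_nonneg_left hsig2 hη.le
  have hP1 : (β+lam)⁻¹*(1-η*M) ≤ (β+lam)⁻¹ - η*sig (β+lam) := by
    have e : (β+lam)⁻¹*(1-η*M) = (β+lam)⁻¹ - η*((β+lam)⁻¹*M) := by ring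
    linarith [e.le, e.ge]
  have hP2 : (β-lam)⁻¹*(1-η*M) ≤ (β-lam)⁻¹ - η*sig (β-lam) := by
    have e : (β-lam)⁻¹*(1-η*M) = (β-lam)⁻¹ - η*((β-lam)⁻¹*M) := by ring
    linarith [e.le, e.ge]
  have hPf : 0 < 1 - η*M := by linarith
  have h1pos : (0:ℝ) < (β+lam)⁻¹*(1-η*M) := by positivity
  have h2pos : (0:ℝ) < (β-lam)⁻¹*(1-η*M) := by positivity
  have hLB := Fcal_ge_LB (η := η) hx1 hx2 hη.le (by linarith)
  rw [hF] at hLB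
  have hchain : β^2 * ((β+lam)⁻¹*(1-η*M)) * ((β-lam)⁻¹*(1-η*M))
      ≤ β^2 * ((β+lam)⁻¹ - η*sig (β+lam)) * ((β-lam)⁻¹ - η*sig (β-lam)) := by
    apply mul_le_mul (mul_le_mul_of_nonneg_left hP1 (by positivity)) hP2 h2pos.le
    exact mul_nonneg (by positivity) (le_trans h1pos.le hP1)
  have hval : β^2 * ((β+lam)⁻¹*(1-η*M)) * ((β-lam)⁻¹*(1-η*M))
      = β^2*(1-η*M)^2/(β^2-lam^2) := by
    have hne1 : β+lam ≠ 0 := ne_of_gt hx1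
    have hne2 : β-lam ≠ 0 := ne_of_gt hx2
    rw [show β^2-lam^2 = (β+lam)*(β-lam) by ring]
    field_simp
  rw [hval] at hchain
  have hfin : 1 < β^2*(1-η*M)^2/(β^2-lam^2) := by
    rw [lt_div_iff₀ (by linarith : (0:ℝ) < β^2-lam^2)]
    have hb2 : β^2*(η*M) ≤ r^2/4 := by
      have h1 := mul_le_mul_of_nonneg_left hu (sq_nonneg β)
      have h2 : β^2*(r^2/(4*β^2)) = r^2/4 := by field_simp
      linarith
    nlinarith [hb2, mul_nonneg (sq_nonneg β) (sq_nonneg (η*M)), hrl, mul_pos hr hr]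
  linarith

lemma sig_pos {x : ℝ} (hx : 0 < x) : 0 < sig x := by
  unfold sig
  have : 0 < π / (x/2) := by positivity
  positivity

set_option maxHeartbeats 2000000

/-- Equilibrium (`τ = 0`) scaling limits: with both walls at temperature `T` and
`κ = √(T/(2π))`, `lim_{ε↓0} ε⁻² ℱ(ελ, 0, T) = κ λ² T²` and
`lim_{ε↓0} ε⁻² 𝓘(εj, 0, T) = j²/(4κT²)`. -/
theorem equilibrium_scaling_limit
    (T : ℝ) (hT : 0 < T) (κ : ℝ) (hκ : κ = Real.sqrt (T / (2 * Real.pi)))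
    (f : ℝ → EReal) (hf : IsCGF (1 / T) (1 / T) f) :
    (∀ lam : ℝ,
      Tendsto (fun ε : ℝ => (((ε ^ 2)⁻¹ : ℝ) : EReal) * f (ε * lam))
        (𝓝[>] 0) (nhds ((κ * lam ^ 2 * T ^ 2 : ℝ) : EReal))) ∧
    (∀ j : ℝ,
      Tendsto (fun ε : ℝ => (((ε ^ 2)⁻¹ : ℝ) : EReal) * legendre f (ε * j))
        (𝓝[>] 0) (nhds ((j ^ 2 / (4 * κ * T ^ 2) : ℝ) : EReal))) := by
  have hπ : (0:ℝ) < π := pi_pos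
  set β : ℝ := 1/T with hβdef
  have hβ : 0 < β := by positivity
  obtain ⟨hf0', hfin, htop⟩ := hf
  have hf0 : f 0 = 0 := hf0' 0 (by rw [sub_self]; exact Set.left_mem_uIcc)
  have hfin' : ∀ lam : ℝ, lam ≠ 0 → |lam| < β →
      ∃ η : ℝ, 0 < η ∧ Fcal β β lam η = 1 ∧ f lam = (η : EReal) := by
    intro lam h0 hl
    apply hfin
    constructor
    · exact Set.mem_Ioo.mpr ⟨by linarith [(abs_lt.mp hl).1], (abs_lt.mp hl).2⟩
    · rw [sub_self, Set.uIcc_self]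
      simpa using h0
  have htop' : ∀ lam : ℝ, β ≤ |lam| → f lam = ⊤ := by
    intro lam hl
    apply htop
    intro hmem
    obtain ⟨h1, h2⟩ := Set.mem_Ioo.mp hmem
    have : |lam| < β := abs_lt.mpr ⟨by linarith, h2⟩
    linarith
  have hκpos : 0 < κ := by
    rw [hκ]; exact Real.sqrt_pos.mpr (by positivity)
  have hcs : 0 < κ*T^2 := by positivity
  have hsigβ : sig β = Real.sqrt (2*π*T)/2 := by
    unfold sig
    rw [hβdef, show π/((1/T)/2) = 2*π*T by field_simp]
  have hkey : κ * Real.sqrt (2*π*T) = T := by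
    rw [hκ, ← Real.sqrt_mul (by positivity)]
    rw [show T/(2*π)*(2*π*T) = T^2 by field_simp]
    exact Real.sqrt_sq hT.le
  have hsigpos : 0 < sig β := sig_pos hβ
  have hE : (β^2)⁻¹ = (κ*T^2)*(2*β*sig β) := by
    have h1 : (κ*T^2)*(2*β*sig β) = (κ*Real.sqrt (2*π*T))*T := by
      rw [hsigβ, hβdef]; field_simp
    rw [h1, hkey, hβdef]
    field_simp
  have hcrit : ∀ c : ℝ, c < κ*T^2 → 2*c*β*sig β < (β^2)⁻¹ := by
    intro c hc
    rw [hE]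
    have hpos : 0 < 2*β*sig β := by positivity
    calc 2*c*β*sig β = c*(2*β*sig β) := by ring
      _ < (κ*T^2)*(2*β*sig β) := mul_lt_mul_of_pos_right hc hpos
  have hcrit' : ∀ c : ℝ, κ*T^2 < c → (β^2)⁻¹ < 2*c*β*sig β := by
    intro c hc
    rw [hE]
    have hpos : 0 < 2*β*sig β := by positivity
    calc (κ*T^2)*(2*β*sig β) < c*(2*β*sig β) := mul_lt_mul_of_pos_right hc hpos
      _ = 2*c*β*sig β := by ring
  constructor
  · -- Part 1
    intro lam
    by_cases hlam0 : lam = 0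
    · subst hlam0
      have heq : (fun ε : ℝ => (((ε ^ 2)⁻¹ : ℝ) : EReal) * f (ε * 0)) = fun _ => (0:EReal) := by
        funext ε
        rw [mul_zero, hf0, mul_zero]
      rw [heq]
      norm_num
    · have hlamsq : 0 < lam^2 := by positivity
      have hlamabs : 0 < |lam| := abs_pos.mpr hlam0
      have key : ∀ c c' : ℝ, 0 < c → c < κ*T^2 → κ*T^2 < c' →
          ∀ᶠ ε in 𝓝[>](0:ℝ), ∃ η : ℝ, 0 < η ∧ f (ε*lam) = (η : EReal) ∧
            c*lam^2 < (ε^2)⁻¹*η ∧ (ε^2)⁻¹*η < c'*lam^2 := by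
        intro c c' hc hclt hc'gt
        obtain ⟨r, hr0, hrβ, Hlow⟩ := eta_lower hβ hc (hcrit c hclt)
        obtain ⟨r', hr'0, hr'β, Hup⟩ := eta_upper hβ (hcrit' c' hc'gt)
        have hmem : Set.Ioo (0:ℝ) (min (r/|lam|) (r'/|lam|)) ∈ 𝓝[>] (0:ℝ) :=
          Ioo_mem_nhdsGT_of_mem ⟨le_rfl, by positivity⟩
        filter_upwards [hmem] with ε hε
        obtain ⟨hε0, hεlt⟩ := Set.mem_Ioo.mp hε
        have hε2 : 0 < ε^2 := by positivity
        have hel0 : ε*lam ≠ 0 := mul_ne_zero (ne_of_gt hε0) hlam0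
        have habs : |ε*lam| = ε*|lam| := by rw [abs_mul, abs_of_pos hε0]
        have habsr : |ε*lam| < r := by
          rw [habs]
          calc ε*|lam| < (r/|lam|)*|lam| := by
                apply mul_lt_mul_of_pos_right _ hlamabs
                exact lt_of_lt_of_le hεlt (min_le_left _ _)
            _ = r := by field_simp
        have habsr' : |ε*lam| < r' := by
          rw [habs]
          calc ε*|lam| < (r'/|lam|)*|lam| := by
                apply mul_lt_mul_of_pos_right _ hlamabs
                exact lt_of_lt_of_le hεlt (min_le_right _ _)
            _ = r' := by field_simp
        have hord : |ε*lam| < β := lt_trans habsr (by linarith)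
        obtain ⟨η, hη, hFη, hfval⟩ := hfin' (ε*lam) hel0 hord
        refine ⟨η, hη, hfval, ?_, ?_⟩
        · have h := Hlow (ε*lam) hel0 habsr η hη hFη
          rw [show (ε^2)⁻¹*η = η/ε^2 by ring, lt_div_iff₀ hε2]
          calc c*lam^2*ε^2 = c*(ε*lam)^2 := by ring
            _ < η := h
        · have h := Hup (ε*lam) hel0 habsr' η hη hFη
          rw [show (ε^2)⁻¹*η = η/ε^2 by ring, div_lt_iff₀ hε2]
          calc η < c'*(ε*lam)^2 := h
            _ = c'*lam^2*ε^2 := by ring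
      rw [tendsto_order]
      constructor
      · intro b hb
        induction b using EReal.rec with
        | bot =>
          filter_upwards [key (κ*T^2/2) (κ*T^2+1) (by positivity) (by linarith) (by linarith)]
            with ε hev
          obtain ⟨η, hη, hfval, h1, h2⟩ := hev
          rw [hfval, ← EReal.coe_mul]
          exact EReal.bot_lt_coe _
        | coe u =>
          have hu : u < κ*lam^2*T^2 := EReal.coe_lt_coe_iff.mp hb
          set c : ℝ := ((max u 0)/lam^2 + κ*T^2)/2 with hcdef
          have hmax0 : 0 ≤ max u 0 := le_max_right _ _
          have hc0 : 0 < c := by positivity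
          have hmlt : (max u 0)/lam^2 < κ*T^2 := by
            rw [div_lt_iff₀ hlamsq]
            rcases le_or_gt u 0 with h | h
            · rw [max_eq_right h]; positivity
            · rw [max_eq_left h.le]; linarith
          have hclt : c < κ*T^2 := by
            rw [hcdef]; linarith
          have hcu : u < c*lam^2 := by
            have h1 : (max u 0)/lam^2 * lam^2 = max u 0 := by field_simp
            have h2 : u ≤ max u 0 := le_max_left _ _
            have h3 : c*lam^2 = ((max u 0)/lam^2)*lam^2/2 + (κ*T^2)*lam^2/2 := by
              rw [hcdef]; ring
            have h4 : (max u 0)/lam^2 * lam^2 < (κ*T^2)*lam^2 :=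
              mul_lt_mul_of_pos_right hmlt hlamsq
            linarith
          filter_upwards [key c (κ*T^2+1) hc0 hclt (by linarith)] with ε hev
          obtain ⟨η, hη, hfval, h1, h2⟩ := hev
          rw [hfval, ← EReal.coe_mul, EReal.coe_lt_coe_iff]
          linarith
        | top => exact absurd hb (not_lt.mpr le_top)
      · intro b hb
        induction b using EReal.rec with
        | bot => exact absurd hb (not_lt.mpr bot_le)
        | coe u =>
          have hu : κ*lam^2*T^2 < u := EReal.coe_lt_coe_iff.mp hb
          set c' : ℝ := (u/lam^2 + κ*T^2)/2 with hc'def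
          have hgt : κ*T^2 < u/lam^2 := by
            rw [lt_div_iff₀ hlamsq]; linarith
          have hc'gt : κ*T^2 < c' := by rw [hc'def]; linarith
          have hc'u : c'*lam^2 < u := by
            have h1 : (u/lam^2) * lam^2 = u := by field_simp
            have h3 : c'*lam^2 = (u/lam^2)*lam^2/2 + (κ*T^2)*lam^2/2 := by
              rw [hc'def]; ring
            have h4 : (κ*T^2)*lam^2 < (u/lam^2)*lam^2 :=
              mul_lt_mul_of_pos_right hgt hlamsq
            linarith
          filter_upwards [key (κ*T^2/2) c' (by positivity) (by linarith) hc'gt] with ε hev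
          obtain ⟨η, hη, hfval, h1, h2⟩ := hev
          rw [hfval, ← EReal.coe_mul, EReal.coe_lt_coe_iff]
          linarith
        | top =>
          filter_upwards [key (κ*T^2/2) (κ*T^2+1) (by positivity) (by linarith) (by linarith)]
            with ε hev
          obtain ⟨η, hη, hfval, h1, h2⟩ := hev
          rw [hfval, ← EReal.coe_mul]
          exact EReal.coe_lt_top _
  · -- Part 2
    intro j
    set B : ℝ := j^2/(4*κ*T^2) with hBdef
    have hB0 : 0 ≤ B := by positivity
    have PKG : ∀ δ : ℝ, 0 < δ → ∀ᶠ ε in 𝓝[>](0:ℝ), ∃ t : ℝ,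
        legendre f (ε*j) = (t:EReal) ∧ ε^2*(B-δ) < t ∧ t < ε^2*(B+δ) := by
      intro δ hδ
      set γ : ℝ := (j^2/(4*(B+δ)) + κ*T^2)/2 with hγdef
      have hBδ : 0 < B + δ := by linarith
      have hγ0 : 0 < γ := by positivity
      have hjlt : j^2/(4*(B+δ)) < κ*T^2 := by
        rw [div_lt_iff₀ (show (0:ℝ) < 4*(B+δ) by positivity)]
        have he : κ*T^2*(4*(B+δ)) = j^2 + 4*(κ*T^2)*δ := by
          rw [hBdef]; field_simp
        linarith [he, mul_pos (mul_pos hκpos (pow_pos hT 2)) hδ]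
      have hγlt : γ < κ*T^2 := by rw [hγdef]; linarith
      have hwlt : j^2/(4*γ) < B + δ := by
        have h1 : j^2/(4*(B+δ)) < γ := by rw [hγdef]; linarith
        rw [div_lt_iff₀ (by positivity : (0:ℝ) < 4*(B+δ))] at h1
        rw [div_lt_iff₀ (by positivity : (0:ℝ) < 4*γ)]
        linarith [h1]
      set w : ℝ := j^2/(4*γ) with hwdef
      have hw0 : 0 ≤ w := by positivity
      set c' : ℝ := (κ*T^2)*(3 - (B-δ)/B)/2 with hc'def
      have hc'gt : κ*T^2 < c' := by
        rcases eq_or_lt_of_le hB0 with hB | hB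
        · rw [hc'def, ← hB]
          simp only [zero_sub, div_zero, sub_zero]
          linarith
        · have h1 : (B-δ)/B < 1 := by
            rw [div_lt_one hB]; linarith
          have h2 : 0 < κ*T^2*(1 - (B-δ)/B) := mul_pos hcs (by linarith)
          rw [hc'def]; nlinarith [h2]
      obtain ⟨r, hr0, hrβ2, Hlow⟩ := eta_lower hβ hγ0 (hcrit γ hγlt)
      obtain ⟨m, hm0, Hmid⟩ := eta_mid hβ hr0 (by linarith : r < β)
      obtain ⟨r', hr'0, hr'β2, Hup⟩ := eta_upper hβ (hcrit' c' hc'gt)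
      set a : ℝ := j/(2*(κ*T^2)) with hadef
      have hmem : Set.Ioo (0:ℝ) (min (m/(β*(|j|+1))) (r'/(|a|+1))) ∈ 𝓝[>] (0:ℝ) :=
        Ioo_mem_nhdsGT_of_mem ⟨le_rfl, by positivity⟩
      filter_upwards [hmem] with ε hεmem
      obtain ⟨hε0, hεlt⟩ := Set.mem_Ioo.mp hεmem
      have hε2 : (0:ℝ) < ε^2 := by positivity
      have hεm2 : ε*(β*(|j|+1)) < m := by
        have h2 : (0:ℝ) < β*(|j|+1) := by positivity
        calc ε*(β*(|j|+1)) < (m/(β*(|j|+1)))*(β*(|j|+1)) :=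
              mul_lt_mul_of_pos_right (lt_of_lt_of_le hεlt (min_le_left _ _)) h2
          _ = m := div_mul_cancel₀ m (ne_of_gt h2)
      have hεr' : ε*(|a|+1) < r' := by
        have h2 : (0:ℝ) < |a|+1 := by positivity
        calc ε*(|a|+1) < (r'/(|a|+1))*(|a|+1) :=
              mul_lt_mul_of_pos_right (lt_of_lt_of_le hεlt (min_le_right _ _)) h2
          _ = r' := div_mul_cancel₀ r' (ne_of_gt h2)
      have hsup : legendre f (ε*j) ≤ ((ε^2*w : ℝ) : EReal) := by
        rw [legendre]
        apply iSup_le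
        intro lam
        by_cases hc1 : |lam| < r
        · by_cases hl0 : lam = 0
          · subst hl0
            rw [hf0, sub_zero]
            exact EReal.coe_le_coe_iff.mpr (by linarith [mul_nonneg hε2.le hw0])
          · obtain ⟨η, hη, hFη, hfval⟩ := hfin' lam hl0 (by linarith : |lam| < β)
            have hγη := Hlow lam hl0 hc1 η hη hFη
            rw [hfval, ← EReal.coe_sub]
            apply EReal.coe_le_coe_iff.mpr
            have hw4 : 4*γ*w = j^2 := by rw [hwdef]; field_simp
            have hw5 : ε^2*(4*γ*w) = ε^2*j^2 := by rw [hw4]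
            nlinarith [sq_nonneg (2*γ*lam - ε*j), mul_le_mul_of_nonneg_left hγη.le hγ0.le, hw5]
        · by_cases hc2 : |lam| < β
          · have hl0 : lam ≠ 0 := by
              intro h
              rw [h] at hc1
              simp only [abs_zero] at hc1
              exact hc1 hr0
            obtain ⟨η, hη, hFη, hfval⟩ := hfin' lam hl0 hc2
            have hmη := Hmid lam hc2 (not_lt.mp hc1) η hη hFη
            rw [hfval, ← EReal.coe_sub]
            apply EReal.coe_le_coe_iff.mpr
            have ha1 : lam * (ε * j) ≤ |lam| * (ε * |j|) := by
              calc lam * (ε * j) ≤ |lam * (ε * j)| := le_abs_self _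
                _ = |lam| * (ε * |j|) := by rw [abs_mul, abs_mul, abs_of_pos hε0]
            have ha2 : |lam| * (ε * |j|) ≤ β * (ε * |j|) :=
              mul_le_mul_of_nonneg_right hc2.le (by positivity)
            have ha3 : β * (ε * |j|) ≤ ε * (β * (|j| + 1)) := by linarith [mul_pos hε0 hβ]
            linarith [ha1, ha2, ha3, hεm2, hmη, mul_nonneg hε2.le hw0]
          · rw [htop' lam (not_lt.mp hc2), EReal.sub_top]
            exact bot_le
      have hlow0 : ((0:ℝ):EReal) ≤ legendre f (ε*j) := by
        have h : ((0*(ε*j) : ℝ) : EReal) - f 0 ≤ legendre f (ε*j) :=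
          le_iSup (fun lam : ℝ => ((lam*(ε*j) : ℝ) : EReal) - f lam) 0
        rw [hf0, sub_zero] at h
        simpa using h
      have hne_top : legendre f (ε*j) ≠ ⊤ := (lt_of_le_of_lt hsup (EReal.coe_lt_top _)).ne
      have hne_bot : legendre f (ε*j) ≠ ⊥ := (lt_of_lt_of_le (EReal.bot_lt_coe 0) hlow0).ne'
      have hteq : legendre f (ε*j) = (((legendre f (ε*j)).toReal : ℝ) : EReal) :=
        (EReal.coe_toReal hne_top hne_bot).symm
      set t : ℝ := (legendre f (ε*j)).toReal with htdef
      have htle : t ≤ ε^2*w := by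
        rw [hteq] at hsup
        exact EReal.coe_le_coe_iff.mp hsup
      have ht0 : (0:ℝ) ≤ t := by
        rw [hteq] at hlow0
        exact EReal.coe_le_coe_iff.mp hlow0
      refine ⟨t, hteq, ?_, ?_⟩
      · rcases eq_or_ne j 0 with hj | hj
        · have hBz : B = 0 := by rw [hBdef, hj]; norm_num
          rw [hBz]
          linarith [mul_neg_of_pos_of_neg hε2 (show (0:ℝ)-δ < 0 by linarith)]
        · have hj2 : 0 < j^2 := (sq_nonneg j).lt_of_ne (Ne.symm (pow_ne_zero 2 hj))
          have hBpos : 0 < B := by rw [hBdef]; positivity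
          have ha0 : a ≠ 0 := by
            rw [hadef]
            exact div_ne_zero hj (by positivity)
          have haabs : 0 < |a| := abs_pos.mpr ha0
          have hεa0 : ε*a ≠ 0 := mul_ne_zero (ne_of_gt hε0) ha0
          have habsr' : |ε*a| < r' := by
            rw [abs_mul, abs_of_pos hε0]
            linarith [hε0]
          obtain ⟨η, hη, hFη, hfval⟩ := hfin' (ε*a) hεa0 (by linarith : |ε*a| < β)
          have hupη := Hup (ε*a) hεa0 habsr' η hη hFη
          have hterm : ((ε*a*(ε*j) : ℝ) : EReal) - f (ε*a) ≤ legendre f (ε*j) :=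
            le_iSup (fun lam : ℝ => ((lam*(ε*j) : ℝ) : EReal) - f lam) (ε*a)
          rw [hfval, ← EReal.coe_sub, hteq, EReal.coe_le_coe_iff] at hterm
          have ea : a*j = 2*B := by
            rw [hadef, hBdef]; field_simp; ring
          have ec : c'*a^2 = B + δ/2 := by
            rw [hc'def, hadef, hBdef]
            have hTne : T ≠ 0 := ne_of_gt hT
            have hκne : κ ≠ 0 := ne_of_gt hκpos
            field_simp
            ring
          have hkey2 : a*j - c'*a^2 = B - δ/2 := by rw [ea, ec]; ring
          have e1 : ε*a*(ε*j) = ε^2*(a*j) := by ring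
          have e2 : c'*(ε*a)^2 = ε^2*(c'*a^2) := by ring
          have e3 : ε^2*(a*j - c'*a^2) = ε^2*(B - δ/2) := by rw [hkey2]
          linarith [hterm, hupη, e3, mul_pos hε2 (half_pos hδ)]
      · have h4 := mul_lt_mul_of_pos_left hwlt hε2
        linarith
    rw [tendsto_order]
    constructor
    · intro b hb
      induction b using EReal.rec with
      | bot =>
        filter_upwards [PKG 1 one_pos] with ε hev
        obtain ⟨t, hteq, h1, h2⟩ := hev
        rw [hteq, ← EReal.coe_mul]
        exact EReal.bot_lt_coe _
      | coe u =>
        have hu : u < B := EReal.coe_lt_coe_iff.mp hb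
        filter_upwards [PKG (B-u) (by linarith), self_mem_nhdsWithin] with ε hev hε0'
        obtain ⟨t, hteq, h1, h2⟩ := hev
        have hε0 : (0:ℝ) < ε := hε0'
        have hε2 : (0:ℝ) < ε^2 := by positivity
        rw [hteq, ← EReal.coe_mul, EReal.coe_lt_coe_iff]
        have h3 : ε^2*(B-(B-u)) = ε^2*u := by ring
        calc u = (ε^2)⁻¹*(ε^2*u) := by field_simp
          _ < (ε^2)⁻¹*t := by
              apply mul_lt_mul_of_pos_left _ (by positivity)
              linarith
      | top => exact absurd hb (not_lt.mpr le_top)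
    · intro b hb
      induction b using EReal.rec with
      | bot => exact absurd hb (not_lt.mpr bot_le)
      | coe u =>
        have hu : B < u := EReal.coe_lt_coe_iff.mp hb
        filter_upwards [PKG (u-B) (by linarith), self_mem_nhdsWithin] with ε hev hε0'
        obtain ⟨t, hteq, h1, h2⟩ := hev
        have hε0 : (0:ℝ) < ε := hε0'
        have hε2 : (0:ℝ) < ε^2 := by positivity
        rw [hteq, ← EReal.coe_mul, EReal.coe_lt_coe_iff]
        have h3 : ε^2*(B+(u-B)) = ε^2*u := by ring
        calc (ε^2)⁻¹*t < (ε^2)⁻¹*(ε^2*u) := by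
              apply mul_lt_mul_of_pos_left _ (by positivity)
              linarith
          _ = u := by field_simp
      | top =>
        filter_upwards [PKG 1 one_pos] with ε hev
        obtain ⟨t, hteq, h1, h2⟩ := hev
        rw [hteq, ← EReal.coe_mul]
        exact EReal.coe_lt_top _
end

section
/- Let π⁺ and π⁻ be Borel probability measures on (0,∞) with ∫ p² dπ^±(p) < ∞ and ∫ (1/p) dπ^±(p) < ∞. Let (v_k)_{k≥1} be independent random variables with v_k distributed according to π⁺ for odd k and according to π⁻ for even k. Set τ_k = 1/v_k, fix S₀ ≥ 0, S_k = S₀ + τ₁ + ⋯ + τ_k, N_t = Σ_{k≥1} 1(S_k ≤ t), and J[0,t] = (1/2) Σ_{k=1}^{N_t} (−1)^{k+1} v_k². Then almost surely lim_{t→∞} J[0,t]/t = (1/2) (∫ p² dπ⁺(p) − ∫ p² dπ⁻(p)) / (∫ (1/p) dπ⁺(p) + ∫ (1/p) dπ⁻(p)). -/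
open MeasureTheory ProbabilityTheory Filter


/-- If the even and odd subsequences converge, so does the sequence. -/
lemma my_tendsto_of_even_odd {f : ℕ → ℝ} {a : ℝ}
    (he : Tendsto (fun m => f (2 * m)) atTop (nhds a))
    (ho : Tendsto (fun m => f (2 * m + 1)) atTop (nhds a)) :
    Tendsto f atTop (nhds a) := by
  rw [Metric.tendsto_atTop] at *
  intro ε hε
  obtain ⟨N1, h1⟩ := he ε hε
  obtain ⟨N2, h2⟩ := ho ε hε
  refine ⟨2 * (max N1 N2) + 1, fun n hn => ?_⟩
  rcases Nat.even_or_odd n with ⟨m, hm⟩ | ⟨m, hm⟩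
  · have hmn : 2 * m = n := by omega
    have : max N1 N2 ≤ m := by omega
    simpa [hmn] using h1 m (le_trans (le_max_left _ _) this)
  · have hmn : 2 * m + 1 = n := by omega
    have : max N1 N2 ≤ m := by omega
    simpa [hmn] using h2 m (le_trans (le_max_right _ _) this)

lemma my_sum_range_two_mul (a : ℕ → ℝ) (m : ℕ) :
    ∑ i ∈ Finset.range (2 * m), a i =
      (∑ j ∈ Finset.range m, a (2 * j)) + ∑ j ∈ Finset.range m, a (2 * j + 1) := by
  induction m with
  | zero => simp
  | succ m ih =>
    have h : 2 * (m + 1) = (2 * m) + 1 + 1 := by ring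
    rw [h, Finset.sum_range_succ, Finset.sum_range_succ, Finset.sum_range_succ,
      Finset.sum_range_succ, ih]
    ring

lemma my_ratio1 : Tendsto (fun m : ℕ => (m : ℝ) / (2 * m + 1)) atTop (nhds (1 / 2)) := by
  have h : Tendsto (fun m : ℕ => (2 + (m : ℝ)⁻¹)⁻¹) atTop (nhds (1 / 2)) := by
    have := (tendsto_const_nhds (x := (2:ℝ)) (f := atTop)).add
      (tendsto_inv_atTop_nhds_zero_nat)
    simpa [one_div] using this.inv₀ (by norm_num)
  refine h.congr' ?_
  filter_upwards [eventually_ge_atTop 1] with m hm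
  have hm' : (0:ℝ) < m := by exact_mod_cast hm
  field_simp

lemma my_ratio2 : Tendsto (fun m : ℕ => (m : ℝ) / (2 * m)) atTop (nhds (1 / 2)) := by
  refine tendsto_const_nhds.congr' ?_
  filter_upwards [eventually_ge_atTop 1] with m hm
  have hm' : (0:ℝ) < m := by exact_mod_cast hm
  field_simp

lemma my_ratio3 : Tendsto (fun m : ℕ => ((m : ℝ) + 1) / (2 * m + 1)) atTop (nhds (1 / 2)) := by
  have h : Tendsto (fun m : ℕ => ((2 : ℝ) - ((m:ℝ) + 1)⁻¹)⁻¹) atTop (nhds (1 / 2)) := by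
    have h0 : Tendsto (fun m : ℕ => ((m:ℝ) + 1)⁻¹) atTop (nhds 0) := by
      have : Tendsto (fun m : ℕ => (m:ℝ) + 1) atTop atTop :=
        tendsto_natCast_atTop_atTop.atTop_add tendsto_const_nhds
      exact this.inv_tendsto_atTop
    have := (tendsto_const_nhds (x := (2:ℝ)) (f := atTop)).sub h0
    simpa [one_div] using this.inv₀ (by norm_num)
  refine h.congr' ?_
  filter_upwards [eventually_ge_atTop 1] with m hm
  have hm' : (0:ℝ) < m := by exact_mod_cast hm
  have h1 : (0:ℝ) < (m:ℝ) + 1 := by linarith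
  have : (2 : ℝ) - ((m:ℝ) + 1)⁻¹ = (2*(m:ℝ)+1) / ((m:ℝ)+1) := by field_simp; ring
  rw [this, inv_div]

/-- Cesàro average from even/odd subsequence averages. -/
lemma my_avg_even_odd {a : ℕ → ℝ} {α β : ℝ}
    (ha : Tendsto (fun m => (∑ j ∈ Finset.range m, a (2 * j)) / m) atTop (nhds α))
    (hb : Tendsto (fun m => (∑ j ∈ Finset.range m, a (2 * j + 1)) / m) atTop (nhds β)) :
    Tendsto (fun n => (∑ i ∈ Finset.range n, a i) / n) atTop (nhds ((α + β) / 2)) := by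
  set e : ℕ → ℝ := fun m => ∑ j ∈ Finset.range m, a (2 * j) with he
  set o : ℕ → ℝ := fun m => ∑ j ∈ Finset.range m, a (2 * j + 1) with ho
  apply my_tendsto_of_even_odd
  · -- even: (e m + o m)/(2m)
    have key : Tendsto (fun m : ℕ => (e m / m) * ((m:ℝ) / (2 * m)) + (o m / m) * ((m:ℝ) / (2 * m)))
        atTop (nhds (α * (1/2) + β * (1/2))) := (ha.mul my_ratio2).add (hb.mul my_ratio2)
    have heq : ∀ m : ℕ, (∑ i ∈ Finset.range (2 * m), a i) / ((2 * m : ℕ) : ℝ) =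
        (e m / m) * ((m:ℝ) / (2 * m)) + (o m / m) * ((m:ℝ) / (2 * m)) := by
      intro m
      rcases Nat.eq_zero_or_pos m with rfl | hm
      · simp
      · have hm' : ((m:ℝ)) ≠ 0 := by positivity
        rw [my_sum_range_two_mul]
        push_cast
        field_simp
        rfl
    have h2 : (α + β) / 2 = α * (1/2) + β * (1/2) := by ring
    rw [h2]
    exact key.congr (fun m => (heq m).symm)
  · -- odd: (e (m+1) + o m)/(2m+1)
    have he1 : Tendsto (fun m : ℕ => e (m + 1) / ((m:ℝ) + 1)) atTop (nhds α) := by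
      have := ha.comp (tendsto_add_atTop_nat 1)
      refine this.congr fun m => ?_
      simp [Function.comp]
      rfl
    have key : Tendsto (fun m : ℕ =>
        (e (m+1) / ((m:ℝ)+1)) * (((m:ℝ)+1) / (2*m+1)) + (o m / m) * ((m:ℝ) / (2*m+1)))
        atTop (nhds (α * (1/2) + β * (1/2))) := (he1.mul my_ratio3).add (hb.mul my_ratio1)
    have heq : ∀ m : ℕ, (∑ i ∈ Finset.range (2 * m + 1), a i) / ((2 * m + 1 : ℕ) : ℝ) =
        (e (m+1) / ((m:ℝ)+1)) * (((m:ℝ)+1) / (2*m+1)) + (o m / m) * ((m:ℝ) / (2*m+1)) := by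
      intro m
      have hsum : ∑ i ∈ Finset.range (2 * m + 1), a i = e (m + 1) + o m := by
        rw [Finset.sum_range_succ, my_sum_range_two_mul, he, ho]
        simp [Finset.sum_range_succ]
        ring
      rcases Nat.eq_zero_or_pos m with rfl | hm
      · simp [hsum, he, ho, Finset.sum_range_succ]
      · have hm' : ((m:ℝ)) ≠ 0 := by positivity
        have h1 : ((m:ℝ)) + 1 ≠ 0 := by positivity
        have h2 : (2*(m:ℝ) + 1) ≠ 0 := by positivity
        rw [hsum]
        push_cast
        field_simp
    have : (α + β) / 2 = α * (1/2) + β * (1/2) := by ring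
    rw [this]
    exact key.congr (fun m => (heq m).symm)

/-- Deterministic renewal counting lemma. -/
lemma my_renewal (s : ℕ → ℝ) (hmono : StrictMono s) (hs0 : 0 ≤ s 0) {μ : ℝ} (hμ : 0 < μ)
    (hlim : Tendsto (fun n => s n / n) atTop (nhds μ))
    (N : ℝ → ℕ) (hN : ∀ t, N t = Set.ncard {k : ℕ | 1 ≤ k ∧ s k ≤ t}) :
    Tendsto N atTop atTop ∧ Tendsto (fun t => (N t : ℝ) / t) atTop (nhds μ⁻¹) := by
  have hs_top : Tendsto s atTop atTop := by
    have h1 : ∀ᶠ n : ℕ in atTop, (n : ℝ) * (μ / 2) ≤ s n := by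
      filter_upwards [hlim.eventually (eventually_ge_nhds (by linarith : μ / 2 < μ)),
        eventually_ge_atTop 1] with n h hn
      have hn' : (0:ℝ) < n := by exact_mod_cast hn
      rw [le_div_iff₀ hn'] at h
      linarith
    have h2 : Tendsto (fun n : ℕ => (n : ℝ) * (μ / 2)) atTop atTop :=
      tendsto_natCast_atTop_atTop.atTop_mul_const (by positivity)
    exact tendsto_atTop_mono' atTop h1 h2
  have hex : ∀ t : ℝ, ∃ n, t < s (n + 1) := by
    intro t
    obtain ⟨n, hn⟩ := ((hs_top.comp (tendsto_add_atTop_nat 1)).eventually_gt_atTop t).exists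
    exact ⟨n, hn⟩
  set m : ℝ → ℕ := fun t => Nat.find (hex t) with hm
  have hm1 : ∀ t, t < s (m t + 1) := fun t => Nat.find_spec (hex t)
  have hm2 : ∀ t, ∀ k, 1 ≤ k → k ≤ m t → s k ≤ t := by
    intro t k h1 h2
    have := Nat.find_min (hex t) (show k - 1 < m t by omega)
    push_neg at this
    have hk : k - 1 + 1 = k := by omega
    rwa [hk] at this
  have hNm : ∀ t, N t = m t := by
    intro t
    rw [hN]
    have hset : {k : ℕ | 1 ≤ k ∧ s k ≤ t} = Set.Icc 1 (m t) := by
      ext k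
      simp only [Set.mem_setOf_eq, Set.mem_Icc]
      constructor
      · rintro ⟨hk, hsk⟩
        refine ⟨hk, ?_⟩
        by_contra h
        push_neg at h
        have := hmono.monotone (show m t + 1 ≤ k by omega)
        have := hm1 t
        linarith
      · rintro ⟨hk1, hk2⟩
        exact ⟨hk1, hm2 t k hk1 hk2⟩
    rw [hset, ← Finset.coe_Icc, Set.ncard_coe_finset, Nat.card_Icc]
    omega
  have hNtop : Tendsto N atTop atTop := by
    rw [tendsto_atTop]
    intro b
    filter_upwards [eventually_ge_atTop (s (b + 1))] with t ht
    rw [hNm t]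
    by_contra h
    push_neg at h
    have h1 : s (m t + 1) ≤ s (b + 1) := hmono.monotone (by omega)
    have := hm1 t
    linarith
  refine ⟨hNtop, ?_⟩
  have hinv : Tendsto (fun n : ℕ => (n : ℝ) / s n) atTop (nhds μ⁻¹) :=
    (hlim.inv₀ hμ.ne').congr fun n => by rw [inv_div]
  have hg : Tendsto (fun n : ℕ => (n : ℝ) / s (n + 1)) atTop (nhds μ⁻¹) := by
    have h1 : Tendsto (fun n : ℕ => ((n : ℝ) + 1) / s (n + 1)) atTop (nhds μ⁻¹) := by
      have := hinv.comp (tendsto_add_atTop_nat 1)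
      refine this.congr fun n => ?_
      simp [Function.comp]
    have h2 : Tendsto (fun n : ℕ => 1 / s (n + 1)) atTop (nhds 0) := by
      have := (hs_top.comp (tendsto_add_atTop_nat 1)).inv_tendsto_atTop
      exact this.congr fun n => by simp [one_div]
    have := h1.sub h2
    rw [sub_zero] at this
    refine this.congr fun n => ?_
    rw [div_sub_div_same]
    ring_nf
  have hposS : ∀ k, 1 ≤ k → 0 < s k := by
    intro k hk
    calc 0 ≤ s 0 := hs0
    _ < s k := hmono (by omega)
  have lower : Tendsto (fun t => (N t : ℝ) / s (N t + 1)) atTop (nhds μ⁻¹) := hg.comp hNtop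
  have upper : Tendsto (fun t => (N t : ℝ) / s (N t)) atTop (nhds μ⁻¹) := hinv.comp hNtop
  refine tendsto_of_tendsto_of_tendsto_of_le_of_le' lower upper ?_ ?_
  · filter_upwards [eventually_gt_atTop 0] with t ht
    have h1 : t ≤ s (N t + 1) := by rw [hNm]; exact (hm1 t).le
    exact div_le_div_of_nonneg_left (by positivity) ht h1
  · filter_upwards [hNtop.eventually_ge_atTop 1, eventually_gt_atTop 0] with t h1 ht
    have hst : s (N t) ≤ t := by rw [hNm] at h1 ⊢; exact hm2 t _ h1 le_rfl
    exact div_le_div_of_nonneg_left (by positivity) (hposS _ h1) hst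

/-- SLLN along an injective subsequence with common law `π`, for an observable `g`. -/
lemma my_slln {Ω : Type*} [MeasurableSpace Ω] (P : Measure Ω) [IsProbabilityMeasure P]
    (π : Measure ℝ) [IsProbabilityMeasure π]
    (v : ℕ → Ω → ℝ) (hmeas : ∀ n, Measurable (v n))
    (hindep : iIndepFun v P)
    (b : ℕ → ℕ) (hb : Function.Injective b)
    (hlawb : ∀ n, Measure.map (v (b n)) P = π)
    (g : ℝ → ℝ) (hg : Measurable g) (hgint : Integrable g π) :
    ∀ᵐ ω ∂P, Tendsto (fun n => (∑ j ∈ Finset.range n, g (v (b j) ω)) / n) atTop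
      (nhds (∫ p, g p ∂π)) := by
  set X : ℕ → Ω → ℝ := fun j => g ∘ v (b j) with hX
  have hint : Integrable (X 0) P := by
    have := (integrable_map_measure hg.aestronglyMeasurable (hmeas (b 0)).aemeasurable).mp
      (by rwa [hlawb 0])
    exact this
  have hindep' : Pairwise (Function.onFun (fun f g => IndepFun f g P) X) := by
    intro i j hij
    exact (hindep.indepFun (fun h => hij (hb h))).comp hg hg
  have hident : ∀ i, IdentDistrib (X i) (X 0) P P := by
    intro i
    have hv : IdentDistrib (v (b i)) (v (b 0)) P P :=
      ⟨(hmeas _).aemeasurable, (hmeas _).aemeasurable, by rw [hlawb, hlawb]⟩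
    exact hv.comp hg
  have hexp : P[X 0] = ∫ p, g p ∂π := by
    rw [← hlawb 0, integral_map (hmeas (b 0)).aemeasurable hg.aestronglyMeasurable]
    rfl
  have := strong_law_ae_real X hint hindep' hident
  rw [hexp] at this
  exact this


/-- Law of large numbers for the current of the alternating renewal process: if the
velocities `v_k` are independent with law `π⁺` for odd `k` and `π⁻` for even `k`
(both supported on `(0,∞)`, with finite second moment and finite mean inverse), then
almost surely `J[0,t]/t → (1/2)(π⁺(p²) − π⁻(p²)) / (π⁺(1/p) + π⁻(1/p))`. -/
theorem current_lln_alternating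
    {Ω : Type*} [MeasurableSpace Ω] (P : Measure Ω) [IsProbabilityMeasure P]
    (πp πm : Measure ℝ) [IsProbabilityMeasure πp] [IsProbabilityMeasure πm]
    (hπp : πp (Set.Iic 0) = 0) (hπm : πm (Set.Iic 0) = 0)
    (hp2 : Integrable (fun p => p ^ 2) πp) (hm2 : Integrable (fun p => p ^ 2) πm)
    (hp1 : Integrable (fun p => p⁻¹) πp) (hm1 : Integrable (fun p => p⁻¹) πm)
    -- (v n) represents v_{n+1} : odd indices k = n+1, i.e. even n, have law π⁺
    (v : ℕ → Ω → ℝ) (hmeas : ∀ n, Measurable (v n))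
    (hindep : iIndepFun v P)
    (hpos : ∀ n, ∀ᵐ ω ∂P, 0 < v n ω)
    (hlaw : ∀ n, Measure.map (v n) P = if Even n then πp else πm)
    (S₀ : ℝ) (hS₀ : 0 ≤ S₀)
    (S : ℕ → Ω → ℝ) (hS : ∀ k ω, S k ω = S₀ + ∑ i ∈ Finset.range k, (v i ω)⁻¹)
    (N : ℝ → Ω → ℕ) (hN : ∀ t ω, N t ω = Set.ncard {k : ℕ | 1 ≤ k ∧ S k ω ≤ t})
    (J : ℝ → Ω → ℝ)
    (hJ : ∀ t ω, J t ω =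
      (1 / 2) * ∑ k ∈ Finset.Icc 1 (N t ω), (-1 : ℝ) ^ (k + 1) * (v (k - 1) ω) ^ 2) :
    ∀ᵐ ω ∂P, Tendsto (fun t : ℝ => J t ω / t) atTop
      (nhds ((1 / 2) * ((∫ p, p ^ 2 ∂πp) - ∫ p, p ^ 2 ∂πm) /
        ((∫ p, p⁻¹ ∂πp) + ∫ p, p⁻¹ ∂πm))) := by
  set Ip2 := ∫ p, p ^ 2 ∂πp with hIp2
  set Im2 := ∫ p, p ^ 2 ∂πm with hIm2
  set Ip1 := ∫ p, p⁻¹ ∂πp with hIp1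
  set Im1 := ∫ p, p⁻¹ ∂πm with hIm1
  -- positivity of the mean inverse speeds
  have key_pos : ∀ (π : Measure ℝ) [IsProbabilityMeasure π], π (Set.Iic 0) = 0 →
      Integrable (fun p => p⁻¹) π → 0 < ∫ p, p⁻¹ ∂π := by
    intro π _ hπ hint
    have hae : ∀ᵐ p ∂π, 0 < p := by
      rw [ae_iff]
      have hset : {p : ℝ | ¬ 0 < p} = Set.Iic 0 := by ext p; simp [not_lt]
      rw [hset]; exact hπ
    have h0 : 0 ≤ᵐ[π] fun p : ℝ => p⁻¹ := hae.mono fun p hp => by positivity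
    rw [integral_pos_iff_support_of_nonneg_ae h0 hint]
    have hIoi : π (Set.Ioi (0:ℝ)) = 1 := by
      have := measure_compl (measurableSet_Iic : MeasurableSet (Set.Iic (0:ℝ)))
        (measure_ne_top π _)
      rw [hπ] at this
      simpa using this
    have hsub : Set.Ioi (0:ℝ) ⊆ Function.support fun p : ℝ => p⁻¹ := by
      intro p hp
      simp only [Function.mem_support]
      have : (0:ℝ) < p := hp
      positivity
    calc (0 : ENNReal) < 1 := by norm_num
    _ = π (Set.Ioi 0) := hIoi.symm
    _ ≤ _ := measure_mono hsub
  have hIp1pos : 0 < Ip1 := key_pos πp hπp hp1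
  have hIm1pos : 0 < Im1 := key_pos πm hπm hm1
  have hμpos : 0 < (Ip1 + Im1) / 2 := by linarith
  -- the four strong laws
  have hlawe : ∀ n, Measure.map (v (2 * n)) P = πp := by
    intro n; rw [hlaw, if_pos (even_two_mul n)]
  have hlawo : ∀ n, Measure.map (v (2 * n + 1)) P = πm := by
    intro n; rw [hlaw, if_neg]
    intro h
    rw [Nat.even_add_one] at h
    exact h (even_two_mul n)
  have hinje : Function.Injective (fun n : ℕ => 2 * n) := by
    intro a b h; dsimp at h; omega
  have hinjo : Function.Injective (fun n : ℕ => 2 * n + 1) := by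
    intro a b h; dsimp at h; omega
  have H1 := my_slln P πp v hmeas hindep _ hinje hlawe (fun p => p⁻¹) measurable_inv hp1
  have H2 := my_slln P πm v hmeas hindep _ hinjo hlawo (fun p => p⁻¹) measurable_inv hm1
  have H3 := my_slln P πp v hmeas hindep _ hinje hlawe (fun p => p ^ 2)
    (measurable_id.pow_const 2) hp2
  have H4 := my_slln P πm v hmeas hindep _ hinjo hlawo (fun p => p ^ 2)
    (measurable_id.pow_const 2) hm2
  have hposall : ∀ᵐ ω ∂P, ∀ n, 0 < v n ω := ae_all_iff.mpr hpos
  filter_upwards [H1, H2, H3, H4, hposall] with ω h1 h2 h3 h4 hp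
  -- inter-arrival averages
  have hT : Tendsto (fun n => (∑ i ∈ Finset.range n, (v i ω)⁻¹) / n) atTop
      (nhds ((Ip1 + Im1) / 2)) := my_avg_even_odd h1 h2
  have hSn : Tendsto (fun n : ℕ => S n ω / n) atTop (nhds ((Ip1 + Im1) / 2)) := by
    have h0 : Tendsto (fun n : ℕ => S₀ / n) atTop (nhds 0) :=
      Tendsto.div_atTop tendsto_const_nhds tendsto_natCast_atTop_atTop
    have := h0.add hT
    rw [zero_add] at this
    refine this.congr fun n => ?_
    rw [hS, add_div]
  have hmono : StrictMono (fun k => S k ω) := by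
    apply strictMono_nat_of_lt_succ
    intro k
    have hk := hp k
    have hk' : 0 < (v k ω)⁻¹ := by positivity
    simp only [hS, Finset.sum_range_succ]
    linarith
  have hs0 : 0 ≤ S 0 ω := by rw [hS]; simpa using hS₀
  obtain ⟨hNtop, hNt⟩ := my_renewal (fun k => S k ω) hmono hs0 hμpos hSn
    (fun t => N t ω) (fun t => hN t ω)
  -- reward averages
  have hRe : Tendsto (fun m => (∑ j ∈ Finset.range m, ((-1:ℝ) ^ (2 * j) * (v (2 * j) ω) ^ 2)) / m)
      atTop (nhds Ip2) := by
    refine h3.congr fun m => ?_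
    congr 1
    refine Finset.sum_congr rfl fun j _ => ?_
    rw [pow_mul]
    norm_num
  have hRo : Tendsto
      (fun m => (∑ j ∈ Finset.range m, ((-1:ℝ) ^ (2 * j + 1) * (v (2 * j + 1) ω) ^ 2)) / m)
      atTop (nhds (-Im2)) := by
    refine h4.neg.congr fun m => ?_
    rw [← neg_div, ← Finset.sum_neg_distrib]
    congr 1
    refine Finset.sum_congr rfl fun j _ => ?_
    have hpw : (-1:ℝ) ^ (2 * j + 1) = -1 := by
      rw [pow_succ, pow_mul]; norm_num
    rw [hpw]; ring
  have hR : Tendsto (fun n => (∑ i ∈ Finset.range n, (-1:ℝ) ^ i * (v i ω) ^ 2) / n) atTop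
      (nhds ((Ip2 + -Im2) / 2)) := my_avg_even_odd hRe hRo
  have hRN : Tendsto
      (fun t : ℝ => (∑ i ∈ Finset.range (N t ω), (-1:ℝ) ^ i * (v i ω) ^ 2) / (N t ω : ℝ))
      atTop (nhds ((Ip2 + -Im2) / 2)) := hR.comp hNtop
  -- combine
  have hfin : Tendsto (fun t : ℝ =>
      (1/2) * ((∑ i ∈ Finset.range (N t ω), (-1:ℝ) ^ i * (v i ω) ^ 2) / (N t ω : ℝ))
        * ((N t ω : ℝ) / t)) atTop
      (nhds ((1/2) * ((Ip2 + -Im2) / 2) * ((Ip1 + Im1) / 2)⁻¹)) :=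
    (tendsto_const_nhds.mul hRN).mul hNt
  have hval : (1/2 : ℝ) * ((Ip2 + -Im2) / 2) * ((Ip1 + Im1) / 2)⁻¹
      = 1 / 2 * (Ip2 - Im2) / (Ip1 + Im1) := by
    have hne : Ip1 + Im1 ≠ 0 := by linarith
    field_simp
    ring
  rw [← hval]
  refine hfin.congr' ?_
  have hIcc : ∀ n : ℕ, ∑ k ∈ Finset.Icc 1 n, (-1:ℝ) ^ (k + 1) * (v (k - 1) ω) ^ 2
      = ∑ i ∈ Finset.range n, (-1:ℝ) ^ i * (v i ω) ^ 2 := by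
    intro n
    induction n with
    | zero => simp
    | succ n ih =>
      rw [Finset.sum_Icc_succ_top (by omega), ih, Finset.sum_range_succ]
      congr 1
      have h5 : (-1:ℝ) ^ (n + 1 + 1) = (-1) ^ n := by rw [pow_succ, pow_succ]; ring
      have h6 : n + 1 - 1 = n := by omega
      rw [h5, h6]
  filter_upwards [eventually_gt_atTop 0, hNtop.eventually_ge_atTop 1] with t ht hNt1
  rw [hJ, hIcc]
  have hNne : ((N t ω : ℝ)) ≠ 0 := by
    have : (1:ℝ) ≤ (N t ω : ℝ) := by exact_mod_cast hNt1
    linarith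
  field_simp
end
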